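/- Let S be a multisemigroup and let χ be a family of sub-multisemigroups of S such that every finite subset of S is contained in some member of χ. For a subset T ⊆ S let D_T denote the join, in the lattice of equivalence relations on T, of the equivalence relations 'L^T_x = L^T_y' and 'R^T_x = R^T_y' on T, and let D_S denote the corresponding join of L- and R-equivalence on S. Then for all x, y ∈ S: D_S relates x and y if and only if x = y, or there exists T ∈ χ with x ∈ T, y ∈ T such that D_T relates x and y. -/

import Mathlib

open Set

/-- A subset `T` of a multisemigroup `(S, mul)` is a sub-multisemigroup if it is
closed under the multivalued operation. -/
def IsSubMultisemigroup {S : Type*} (mul : S → S → Set S) (T : Set S) : Prop :=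
  ∀ a ∈ T, ∀ b ∈ T, mul a b ⊆ T

/-- The principal left ideal `L^T_x = {x} ∪ ⋃_{s ∈ T} mul s x`. -/
def greenL {S : Type*} (mul : S → S → Set S) (T : Set S) (x : S) : Set S :=
  {x} ∪ ⋃ s ∈ T, mul s x

/-- The principal right ideal `R^T_x = {x} ∪ ⋃_{s ∈ T} mul x s`. -/
def greenR {S : Type*} (mul : S → S → Set S) (T : Set S) (x : S) : Set S :=
  {x} ∪ ⋃ s ∈ T, mul x s

/-- Green's D-relation relative to a subset `T` of a multisemigroup: the join, in
the lattice of equivalence relations on the subtype `T`, of L-equivalence and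
R-equivalence relative to `T`. -/
def greenDSetoid {S : Type*} (mul : S → S → Set S) (T : Set S) : Setoid T :=
  Setoid.ker (fun a : T => greenL mul T (a : S)) ⊔
    Setoid.ker (fun a : T => greenR mul T (a : S))

section Aux

variable {S : Type*} {mul : S → S → Set S}

lemma mem_greenL_self {T : Set S} {x : S} : x ∈ greenL mul T x := Or.inl rfl

lemma mem_greenL_of_mul {T : Set S} {s x y : S} (hs : s ∈ T) (h : y ∈ mul s x) :
    y ∈ greenL mul T x :=
  Or.inr (Set.mem_biUnion hs h)

lemma greenL_subset_of_mem
    (assoc : ∀ a b c : S, (⋃ t ∈ mul a b, mul t c) = ⋃ u ∈ mul b c, mul a u)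
    {T : Set S} (hT : IsSubMultisemigroup mul T) {x y : S}
    (h : x ∈ greenL mul T y) : greenL mul T x ⊆ greenL mul T y := by
  rintro z (rfl | hz)
  · exact h
  · obtain ⟨t, ht, hzt⟩ := Set.mem_iUnion₂.1 hz
    rcases h with rfl | hx
    · exact Or.inr hz
    · obtain ⟨s, hs, hxs⟩ := Set.mem_iUnion₂.1 hx
      have : z ∈ ⋃ u ∈ mul s y, mul t u := Set.mem_biUnion hxs hzt
      rw [← assoc t s y] at this
      obtain ⟨v, hv, hzv⟩ := Set.mem_iUnion₂.1 this
      exact mem_greenL_of_mul (hT t ht s hs hv) hzv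

lemma greenL_eq_iff
    (assoc : ∀ a b c : S, (⋃ t ∈ mul a b, mul t c) = ⋃ u ∈ mul b c, mul a u)
    {T : Set S} (hT : IsSubMultisemigroup mul T) {x y : S} :
    greenL mul T x = greenL mul T y ↔ x ∈ greenL mul T y ∧ y ∈ greenL mul T x := by
  constructor
  · intro h
    exact ⟨h ▸ mem_greenL_self, h ▸ mem_greenL_self⟩
  · rintro ⟨h1, h2⟩
    exact Set.Subset.antisymm (greenL_subset_of_mem assoc hT h1)
      (greenL_subset_of_mem assoc hT h2)

lemma greenL_mono {T T' : Set S} (hTT : T ⊆ T') {x : S} :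
    greenL mul T x ⊆ greenL mul T' x := by
  rintro z (rfl | hz)
  · exact mem_greenL_self
  · obtain ⟨t, ht, hzt⟩ := Set.mem_iUnion₂.1 hz
    exact mem_greenL_of_mul (hTT ht) hzt

lemma isSubMultisemigroup_univ : IsSubMultisemigroup mul (Set.univ : Set S) :=
  fun _ _ _ _ => Set.subset_univ _

/-- Transfer L-equivalence from a sub-multisemigroup up to the whole multisemigroup. -/
lemma greenL_univ_eq_of_greenL_eq
    (assoc : ∀ a b c : S, (⋃ t ∈ mul a b, mul t c) = ⋃ u ∈ mul b c, mul a u)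
    {T : Set S} {x y : S}
    (h : greenL mul T x = greenL mul T y) :
    greenL mul (Set.univ : Set S) x = greenL mul (Set.univ : Set S) y := by
  have h1 : x ∈ greenL mul T y := h ▸ mem_greenL_self
  have h2 : y ∈ greenL mul T x := h.symm ▸ mem_greenL_self
  exact (greenL_eq_iff assoc isSubMultisemigroup_univ).2
    ⟨greenL_mono (Set.subset_univ T) h1, greenL_mono (Set.subset_univ T) h2⟩

/-- Transfer L-equivalence on the whole multisemigroup down to sufficiently large
sub-multisemigroups. -/
lemma exists_finset_greenL
    (assoc : ∀ a b c : S, (⋃ t ∈ mul a b, mul t c) = ⋃ u ∈ mul b c, mul a u)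
    {x y : S} (h : greenL mul (Set.univ : Set S) x = greenL mul (Set.univ : Set S) y) :
    ∃ F : Set S, F.Finite ∧ x ∈ F ∧ y ∈ F ∧ ∀ T, IsSubMultisemigroup mul T → F ⊆ T →
      greenL mul T x = greenL mul T y := by
  have h1 : x ∈ greenL mul (Set.univ : Set S) y := h ▸ mem_greenL_self
  have h2 : y ∈ greenL mul (Set.univ : Set S) x := h.symm ▸ mem_greenL_self
  rcases h1 with rfl | h1
  · exact ⟨{x}, Set.finite_singleton x, rfl, rfl, fun _ _ _ => rfl⟩
  rcases h2 with rfl | h2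
  · exact ⟨{y}, Set.finite_singleton y, rfl, rfl, fun _ _ _ => rfl⟩
  obtain ⟨s, _, hxs⟩ := Set.mem_iUnion₂.1 h1
  obtain ⟨s', _, hys'⟩ := Set.mem_iUnion₂.1 h2
  refine ⟨{x, y, s, s'}, (Set.finite_singleton x).insert y |>.insert s |>.insert s'
      |>.subset (by intro z hz; simp at hz ⊢; tauto),
    by simp, by simp, fun T hT hFT => ?_⟩
  have hsT : s ∈ T := hFT (by simp)
  have hs'T : s' ∈ T := hFT (by simp)
  exact (greenL_eq_iff assoc hT).2
    ⟨mem_greenL_of_mul hsT hxs, mem_greenL_of_mul hs'T hys'⟩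

/-- The flipped multiplication, used to deduce `R`-statements from `L`-statements. -/
lemma assoc_flip
    (assoc : ∀ a b c : S, (⋃ t ∈ mul a b, mul t c) = ⋃ u ∈ mul b c, mul a u) :
    ∀ a b c : S, (⋃ t ∈ (fun a b => mul b a) a b, (fun a b => mul b a) t c) =
      ⋃ u ∈ (fun a b => mul b a) b c, (fun a b => mul b a) a u :=
  fun a b c => (assoc c b a).symm

lemma isSubMultisemigroup_flip {T : Set S} (hT : IsSubMultisemigroup mul T) :
    IsSubMultisemigroup (fun a b => mul b a) T :=
  fun a ha b hb => hT b hb a ha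

lemma greenR_eq_greenL_flip {T : Set S} {x : S} :
    greenR mul T x = greenL (fun a b => mul b a) T x := rfl

lemma rel_sup_left {α : Type*} {r s : Setoid α} {a b : α} (h : r a b) :
    (r ⊔ s).r a b :=
  (Setoid.le_def.1 (le_sup_left : r ≤ r ⊔ s)) h

lemma rel_sup_right {α : Type*} {r s : Setoid α} {a b : α} (h : s a b) :
    (r ⊔ s).r a b :=
  (Setoid.le_def.1 (le_sup_right : s ≤ r ⊔ s)) h

end Aux

/-- Proposition 2.13 (cDbootleg): if `χ` is a family of sub-multisemigroups of a
multisemigroup `S` such that every finite subset of `S` is contained in some member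
of `χ`, then Green's D-relation on `S` (the join of L- and R-equivalence) is the
union of the diagonal relation with the D-relations of the members of `χ`. -/
theorem greenD_iff_of_directed {S : Type*} (mul : S → S → Set S)
    (assoc : ∀ a b c : S, (⋃ t ∈ mul a b, mul t c) = ⋃ u ∈ mul b c, mul a u)
    (χ : Set (Set S)) (hχ : ∀ T ∈ χ, IsSubMultisemigroup mul T)
    (hfin : ∀ F : Set S, F.Finite → ∃ T ∈ χ, F ⊆ T) :
    ∀ x y : S, (greenDSetoid mul Set.univ).r ⟨x, mem_univ x⟩ ⟨y, mem_univ y⟩ ↔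
      x = y ∨ ∃ T ∈ χ, ∃ (hx : x ∈ T) (hy : y ∈ T),
        (greenDSetoid mul T).r ⟨x, hx⟩ ⟨y, hy⟩ := by
  intro x y
  constructor
  · intro h
    have h' : Relation.EqvGen (fun a b : (Set.univ : Set S) =>
        Setoid.ker (fun a : (Set.univ : Set S) => greenL mul Set.univ (a : S)) a b ∨
        Setoid.ker (fun a : (Set.univ : Set S) => greenR mul Set.univ (a : S)) a b)
        ⟨x, mem_univ x⟩ ⟨y, mem_univ y⟩ := by
      rw [greenDSetoid, Setoid.sup_eq_eqvGen] at h
      exact h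
    have key : ∀ a b : (Set.univ : Set S), Relation.EqvGen (fun a b : (Set.univ : Set S) =>
        Setoid.ker (fun a : (Set.univ : Set S) => greenL mul Set.univ (a : S)) a b ∨
        Setoid.ker (fun a : (Set.univ : Set S) => greenR mul Set.univ (a : S)) a b) a b →
        ∃ F : Set S, F.Finite ∧ (a : S) ∈ F ∧ (b : S) ∈ F ∧
          ∀ T, IsSubMultisemigroup mul T → F ⊆ T → ∀ (ha : (a : S) ∈ T) (hb : (b : S) ∈ T),
            (greenDSetoid mul T).r ⟨a, ha⟩ ⟨b, hb⟩ := by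
      intro a b hab
      induction hab with
      | rel a b hab =>
        rcases hab with hL | hR
        · have hL' : greenL mul Set.univ (a : S) = greenL mul Set.univ (b : S) := hL
          obtain ⟨F, hF, haF, hbF, hP⟩ := exists_finset_greenL assoc hL'
          exact ⟨F, hF, haF, hbF, fun T hT hFT ha hb =>
            rel_sup_left (show greenL mul T ((a : S)) = greenL mul T ((b : S)) from
              hP T hT hFT)⟩
        · have hR' : greenL (fun a b => mul b a) Set.univ (a : S) =
              greenL (fun a b => mul b a) Set.univ (b : S) := hR
          obtain ⟨F, hF, haF, hbF, hP⟩ := exists_finset_greenL (assoc_flip assoc) hR'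
          exact ⟨F, hF, haF, hbF, fun T hT hFT ha hb =>
            rel_sup_right (show greenR mul T ((a : S)) = greenR mul T ((b : S)) from
              hP T (isSubMultisemigroup_flip hT) hFT)⟩
      | refl a =>
        exact ⟨{(a : S)}, Set.finite_singleton _, rfl, rfl,
          fun T hT hFT ha hb => (greenDSetoid mul T).refl' _⟩
      | symm a b _ ih =>
        obtain ⟨F, hF, haF, hbF, hP⟩ := ih
        exact ⟨F, hF, hbF, haF, fun T hT hFT hb ha =>
          (greenDSetoid mul T).symm' (hP T hT hFT ha hb)⟩
      | trans a b c _ _ ih1 ih2 =>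
        obtain ⟨F1, hF1, haF1, hbF1, hP1⟩ := ih1
        obtain ⟨F2, hF2, hbF2, hcF2, hP2⟩ := ih2
        refine ⟨F1 ∪ F2, hF1.union hF2, Or.inl haF1, Or.inr hcF2,
          fun T hT hFT ha hc => ?_⟩
        have hb : (b : S) ∈ T := hFT (Or.inl hbF1)
        exact (greenDSetoid mul T).trans'
          (hP1 T hT (fun z hz => hFT (Or.inl hz)) ha hb)
          (hP2 T hT (fun z hz => hFT (Or.inr hz)) hb hc)
    obtain ⟨F, hF, hxF, hyF, hP⟩ := key ⟨x, mem_univ x⟩ ⟨y, mem_univ y⟩ h'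
    obtain ⟨T, hTχ, hFT⟩ := hfin F hF
    exact Or.inr ⟨T, hTχ, hFT hxF, hFT hyF, hP T (hχ T hTχ) hFT (hFT hxF) (hFT hyF)⟩
  · rintro (rfl | ⟨T, hTχ, hx, hy, h⟩)
    · exact (greenDSetoid mul Set.univ).refl' _
    · have hT := hχ T hTχ
      have h' : Relation.EqvGen (fun a b : T =>
          Setoid.ker (fun a : T => greenL mul T (a : S)) a b ∨
          Setoid.ker (fun a : T => greenR mul T (a : S)) a b) ⟨x, hx⟩ ⟨y, hy⟩ := by
        rw [greenDSetoid, Setoid.sup_eq_eqvGen] at h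
        exact h
      have key : ∀ a b : T, Relation.EqvGen (fun a b : T =>
          Setoid.ker (fun a : T => greenL mul T (a : S)) a b ∨
          Setoid.ker (fun a : T => greenR mul T (a : S)) a b) a b →
          (greenDSetoid mul Set.univ).r ⟨a, mem_univ _⟩ ⟨b, mem_univ _⟩ := by
        intro a b hab
        induction hab with
        | rel a b hab =>
          rcases hab with hL | hR
          · exact rel_sup_left (show greenL mul Set.univ ((a : S)) =
              greenL mul Set.univ ((b : S)) from greenL_univ_eq_of_greenL_eq assoc hL)
          · exact rel_sup_right (show greenR mul Set.univ ((a : S)) =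
              greenR mul Set.univ ((b : S)) from
              greenL_univ_eq_of_greenL_eq (assoc_flip assoc)
                (hR : greenL (fun a b => mul b a) T (a : S) =
                  greenL (fun a b => mul b a) T (b : S)))
        | refl a => exact (greenDSetoid mul Set.univ).refl' _
        | symm a b _ ih => exact (greenDSetoid mul Set.univ).symm' ih
        | trans a b c _ _ ih1 ih2 => exact (greenDSetoid mul Set.univ).trans' ih1 ih2
      exact key ⟨x, hx⟩ ⟨y, hy⟩ h'
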